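/- Let W ⊆ R^{n+1} be a convex body containing the origin in its interior whose induced spherical convex body W̃ = α_N^{-1}(W × {1}) satisfies W̃ = W̃° (i.e., W is a self-dual Wulff shape). If W is centrally symmetric (x ∈ W implies −x ∈ W), then W is the closed unit ball D^{n+1}. -/

import Mathlib

open scoped RealInnerProductSpace BigOperators
open Real

namespace Sph

/-- Ambient Euclidean space `ℝ^{n+2}` containing the sphere `S^{n+1}`. -/
abbrev E (n : ℕ) := EuclideanSpace ℝ (Fin (n + 2))

/-- The unit sphere `S^{n+1} ⊂ ℝ^{n+2}`. -/
def sph (n : ℕ) : Set (E n) := {x | ‖x‖ = 1}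

/-- The closed hemisphere `H(P)` centered at `P`. -/
def hemi {n : ℕ} (P : E n) : Set (E n) := {Q | ‖Q‖ = 1 ∧ 0 ≤ ⟪P, Q⟫}

/-- The boundary `∂H(P)` of the hemisphere centered at `P`. -/
def hemiBdry {n : ℕ} (P : E n) : Set (E n) := {Q | ‖Q‖ = 1 ∧ ⟪P, Q⟫ = 0}

/-- Geodesic (angular) distance on the unit sphere. -/
noncomputable def gdist {n : ℕ} (P Q : E n) : ℝ := Real.arccos ⟪P, Q⟫

/-- Radial normalization of a vector. -/
noncomputable def nmz {n : ℕ} (x : E n) : E n := ‖x‖⁻¹ • x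

/-- The geodesic arc joining `P` and `Q`. -/
noncomputable def arc {n : ℕ} (P Q : E n) : Set (E n) :=
  {X | ∃ t ∈ Set.Icc (0 : ℝ) 1, X = nmz ((1 - t) • P + t • Q)}

/-- A subset of the sphere is hemispherical if it misses some closed hemisphere. -/
def Hemispherical {n : ℕ} (W : Set (E n)) : Prop := ∃ P ∈ sph n, W ∩ hemi P = ∅

/-- Spherical convexity: a subset of the sphere closed under geodesic arcs. -/
noncomputable def SphConvex {n : ℕ} (W : Set (E n)) : Prop :=
  W ⊆ sph n ∧ ∀ P ∈ W, ∀ Q ∈ W, arc P Q ⊆ W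

/-- Interior of `W` relative to the sphere. -/
def sphInterior {n : ℕ} (W : Set (E n)) : Set (E n) :=
  {X | X ∈ W ∧ ∃ U : Set (E n), IsOpen U ∧ X ∈ U ∧ U ∩ sph n ⊆ W}

/-- Frontier of `W` relative to the sphere. -/
def sphFrontier {n : ℕ} (W : Set (E n)) : Set (E n) :=
  closure W ∩ closure (sph n \ W)

/-- A spherical convex body: closed, hemispherical, spherically convex,
with an interior point. -/
noncomputable def SphConvexBody {n : ℕ} (W : Set (E n)) : Prop :=
  IsClosed W ∧ Hemispherical W ∧ SphConvex W ∧ (sphInterior W).Nonempty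

/-- The hemisphere `H(P)` supports `W`. -/
noncomputable def Supports {n : ℕ} (W : Set (E n)) (P : E n) : Prop :=
  P ∈ sph n ∧ W ⊆ hemi P ∧ (sphFrontier W ∩ hemiBdry P).Nonempty

/-- The width of `W` determined by the supporting hemisphere `H(P)`:
the minimum thickness `π - |PQ|` of lunes `H(P) ∩ H(Q)` over supporting
hemispheres `H(Q)` (so that `W ⊆ H(P) ∩ H(Q)`). -/
noncomputable def widthAt {n : ℕ} (W : Set (E n)) (P : E n) : ℝ :=
  sInf {d | ∃ Q, Supports W Q ∧ d = π - gdist P Q}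

/-- `W` is of constant width `ρ`. -/
noncomputable def ConstWidth {n : ℕ} (W : Set (E n)) (ρ : ℝ) : Prop :=
  ∀ P, Supports W P → widthAt W P = ρ

/-- The spherical polar set `W° = ⋂_{P ∈ W} H(P)` (as a subset of the sphere). -/
def polar {n : ℕ} (W : Set (E n)) : Set (E n) :=
  {Q | ‖Q‖ = 1 ∧ ∀ P ∈ W, 0 ≤ ⟪P, Q⟫}

/-- The diameter of `W`: the supremum of geodesic distances between its points. -/
noncomputable def diam {n : ℕ} (W : Set (E n)) : ℝ :=
  sSup {d | ∃ P ∈ W, ∃ Q ∈ W, d = gdist P Q}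

/-- The spherical convex hull: normalized nonnegative convex combinations. -/
noncomputable def sconv {n : ℕ} (W : Set (E n)) : Set (E n) :=
  {X | ∃ (k : ℕ) (t : Fin k → ℝ) (f : Fin k → E n), (∀ i, f i ∈ W) ∧
    (∀ i, 0 ≤ t i) ∧ (∑ i, t i) = 1 ∧ X = nmz (∑ i, t i • f i)}

/-- Embedding `x ↦ (x, 1)` of `ℝ^{n+1}` into `ℝ^{n+2}`. -/
noncomputable def lift {n : ℕ} (x : EuclideanSpace ℝ (Fin (n + 1))) : E n :=
  (WithLp.equiv 2 (Fin (n + 2) → ℝ)).symm (Fin.snoc (fun i => x i) 1)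

/-- The north pole `N = (0, …, 0, 1)`. -/
noncomputable def north (n : ℕ) : E n := EuclideanSpace.single (Fin.last (n + 1)) 1

end Sph

open Sph


section Aux

variable {n : ℕ}

lemma lift_apply_castSucc (x : EuclideanSpace ℝ (Fin (n + 1))) (i : Fin (n + 1)) :
    lift x i.castSucc = x i := by
  simp [Sph.lift]

lemma lift_apply_last (x : EuclideanSpace ℝ (Fin (n + 1))) :
    lift x (Fin.last (n + 1)) = 1 := by
  simp [Sph.lift]

lemma lift_ne_zero (x : EuclideanSpace ℝ (Fin (n + 1))) : lift x ≠ 0 := by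
  intro h
  have := lift_apply_last x
  rw [h] at this
  simp at this

lemma inner_lift (x y : EuclideanSpace ℝ (Fin (n + 1))) :
    ⟪lift x, lift y⟫ = ⟪x, y⟫ + 1 := by
  rw [PiLp.inner_apply, PiLp.inner_apply, Fin.sum_univ_castSucc]
  simp [lift_apply_castSucc, lift_apply_last]

lemma inner_nmz_lift (x y : EuclideanSpace ℝ (Fin (n + 1))) :
    ⟪nmz (lift x), nmz (lift y)⟫
      = (‖lift x‖⁻¹ * ‖lift y‖⁻¹) * (⟪x, y⟫ + 1) := by
  rw [Sph.nmz, Sph.nmz, real_inner_smul_left, real_inner_smul_right, inner_lift]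
  ring

lemma norm_lift_pos (x : EuclideanSpace ℝ (Fin (n + 1))) : 0 < ‖lift x‖ :=
  norm_pos_iff.2 (lift_ne_zero x)

lemma norm_nmz_lift (x : EuclideanSpace ℝ (Fin (n + 1))) : ‖nmz (lift x)‖ = 1 := by
  rw [Sph.nmz, norm_smul, norm_inv, norm_norm,
    inv_mul_cancel₀ (norm_lift_pos x).ne']

lemma nmz_lift_inj {x y : EuclideanSpace ℝ (Fin (n + 1))}
    (h : nmz (lift x) = nmz (lift y)) : x = y := by
  have hlast := congrFun (congrArg (WithLp.equiv 2 _) h) (Fin.last (n + 1))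
  simp only [Sph.nmz, WithLp.equiv_apply, PiLp.smul_apply,
    lift_apply_last, smul_eq_mul, mul_one] at hlast
  ext i
  have hi := congrFun (congrArg (WithLp.equiv 2 _) h) (i.castSucc)
  simp only [Sph.nmz, WithLp.equiv_apply, PiLp.smul_apply,
    lift_apply_castSucc, smul_eq_mul] at hi
  rw [hlast] at hi
  exact mul_left_cancel₀ (inv_ne_zero (norm_lift_pos y).ne') hi

end Aux

theorem centrally_symmetric_self_dual_is_ball {n : ℕ}
    (W : Set (EuclideanSpace ℝ (Fin (n + 1)))) (hconv : Convex ℝ W)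
    (hcomp : IsCompact W) (h0 : 0 ∈ interior W)
    (hsymm : ∀ x ∈ W, -x ∈ W)
    (hself : {X : E n | ∃ x ∈ W, X = nmz (lift x)} =
      polar {X : E n | ∃ x ∈ W, X = nmz (lift x)}) :
    W = Metric.closedBall 0 1  := by
  -- Step 1: every pair in W has inner product ≥ -1
  have key : ∀ x ∈ W, ∀ y ∈ W, 0 ≤ ⟪x, y⟫ + 1 := by
    intro x hx y hy
    have hxW : nmz (lift x) ∈ polar {X : E n | ∃ x ∈ W, X = nmz (lift x)} := by
      rw [← hself]; exact ⟨x, hx, rfl⟩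
    have h := hxW.2 (nmz (lift y)) ⟨y, hy, rfl⟩
    rw [inner_nmz_lift] at h
    have hpos : 0 < ‖lift y‖⁻¹ * ‖lift x‖⁻¹ :=
      mul_pos (inv_pos.2 (norm_lift_pos y)) (inv_pos.2 (norm_lift_pos x))
    have := nonneg_of_mul_nonneg_right h hpos
    rwa [real_inner_comm] at this
  -- Step 2: W ⊆ closed ball
  have hball : ∀ x ∈ W, ‖x‖ ≤ 1 := by
    intro x hx
    have h := key x hx (-x) (hsymm x hx)
    rw [inner_neg_right, real_inner_self_eq_norm_sq] at h
    nlinarith [norm_nonneg x]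
  ext y
  simp only [Metric.mem_closedBall, dist_zero_right]
  constructor
  · exact fun hy => hball y hy
  · intro hy
    -- nmz (lift y) lies in the polar
    have hmem : nmz (lift y) ∈ polar {X : E n | ∃ x ∈ W, X = nmz (lift x)} := by
      refine ⟨norm_nmz_lift y, ?_⟩
      rintro P ⟨x, hx, rfl⟩
      rw [inner_nmz_lift]
      have h1 : |⟪x, y⟫| ≤ ‖x‖ * ‖y‖ := abs_real_inner_le_norm x y
      have h2 : ‖x‖ * ‖y‖ ≤ 1 :=
        mul_le_one₀ (hball x hx) (norm_nonneg y) hy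
      have : 0 ≤ ⟪x, y⟫ + 1 := by
        have := abs_le.1 h1
        linarith
      positivity
    rw [← hself] at hmem
    obtain ⟨x, hx, hxy⟩ := hmem
    rwa [nmz_lift_inj hxy]
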